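/- Let λ, δ, β̃, γ̃ > 0. There exists a unique u > 0 satisfying q(u) = 0, where q(u) = u² + (2β̃λ/(γ̃δ))u − 2λ/γ̃; moreover, for this u the point (x^∅, x^1, x^2, x^{12}) = ((δ/β̃)(δu/λ + 1)^{−1}, u/2, u/2, λ/δ) is a common zero of v^∅, v^1, v^2, v^{12}, i.e., it is an equilibrium of the two-chunk fluid system. -/

import Mathlib

/-- The open two-chunk fluid model (download rate `β̃`, swap rate `γ̃`, departure rate
`δ`, arrival rate `λ` of empty peers) has a unique `u > 0` with
`q(u) = u² + (2β̃λ/(γ̃δ))u − 2λ/γ̃ = 0`, and for this `u` the point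
`((δ/β̃)(δu/λ+1)⁻¹, u/2, u/2, λ/δ)` is an equilibrium. -/
theorem two_chunk_open_equilibrium
    (lam δ βt γt : ℝ) (hlam : 0 < lam) (hδ : 0 < δ) (hβt : 0 < βt) (hγt : 0 < γt) :
    (∃! u : ℝ, 0 < u ∧ u ^ 2 + (2 * βt * lam / (γt * δ)) * u - 2 * lam / γt = 0) ∧
    (∀ u : ℝ, 0 < u → u ^ 2 + (2 * βt * lam / (γt * δ)) * u - 2 * lam / γt = 0 →
      (lam - βt * ((δ / βt) * (δ * u / lam + 1)⁻¹) * (u / 2 + u / 2 + lam / δ) = 0 ∧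
       -(u / 2) * (βt * (lam / δ) + γt * (u / 2))
          + βt * ((δ / βt) * (δ * u / lam + 1)⁻¹) * (u / 2 + (lam / δ) / 2) = 0 ∧
       -(u / 2) * (βt * (lam / δ) + γt * (u / 2))
          + βt * ((δ / βt) * (δ * u / lam + 1)⁻¹) * (u / 2 + (lam / δ) / 2) = 0 ∧
       βt * (u / 2 + u / 2) * (lam / δ) + 2 * γt * (u / 2) * (u / 2)
          - δ * (lam / δ) = 0)) := by
  have hγ0 : γt ≠ 0 := ne_of_gt hγt
  have hδ0 : δ ≠ 0 := ne_of_gt hδ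
  have hβ0 : βt ≠ 0 := ne_of_gt hβt
  have hl0 : lam ≠ 0 := ne_of_gt hlam
  constructor
  · set b : ℝ := 2 * βt * lam / (γt * δ) with hbdef
    set c : ℝ := 2 * lam / γt with hcdef
    have hb : 0 < b := by positivity
    have hc : 0 < c := by positivity
    set s : ℝ := Real.sqrt (b ^ 2 + 4 * c) with hsdef
    have hs : s ^ 2 = b ^ 2 + 4 * c := Real.sq_sqrt (by positivity)
    have hsnn : 0 ≤ s := Real.sqrt_nonneg _
    have hsb : b < s := by nlinarith
    refine ⟨(s - b) / 2, ⟨by linarith, by linear_combination hs / 4⟩, ?_⟩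
    rintro v ⟨hv, hqv⟩
    have hfac : (v - (s - b) / 2) * (v + (s - b) / 2 + b) = 0 := by
      linear_combination hqv - hs / 4
    rcases mul_eq_zero.1 hfac with h | h
    · linarith
    · nlinarith
  · intro u hu hq
    have hden : δ * u / lam + 1 ≠ 0 := by positivity
    have hq' : u ^ 2 * (γt * δ) + 2 * βt * lam * u - 2 * lam * δ = 0 := by
      field_simp at hq
      have h2 : (u ^ 2 * (γt * δ) + 2 * βt * lam * u - 2 * lam * δ) * γt = 0 := by
        linear_combination γt * hq
      exact (mul_eq_zero.1 h2).resolve_right hγ0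
    refine ⟨?_, ?_, ?_, ?_⟩
    · have hdl : δ * u + lam ≠ 0 := by positivity
      have e : (δ * u / lam + 1)⁻¹ = lam / (δ * u + lam) := by
        rw [show δ * u / lam + 1 = (δ * u + lam) / lam by field_simp, inv_div]
      rw [e]
      field_simp
      ring
    · field_simp
      linear_combination (-1) * hq'
    · field_simp
      linear_combination (-1) * hq'
    · field_simp
      nlinarith [hq']
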